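/- Let (A_•, f_•) be a complex of length n in C. If Hom(A_{i+k+2}⟦k⟧, A_i) = 0 for all i ≥ 0 and k ≥ 1 (whenever i + k + 2 ≤ n), then (A_•, f_•) admits a convolution. -/

import Mathlib

/-!
Statement 3: If `(A_•, f_•)` is a complex of length `n` in a pretriangulated category `C`
and `Hom(A_{i+k+2}⟦k⟧, A_i) = 0` for all `i ≥ 0`, `k ≥ 1` (with `i + k + 2 ≤ n`), then
`(A_•, f_•)` admits a convolution.
-/

open CategoryTheory CategoryTheory.Limits CategoryTheory.Pretriangulated

variable {C : Type*} [Category C] [Preadditive C] [HasZeroObject C] [HasShift C ℤ]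
  [∀ n : ℤ, (shiftFunctor C n).Additive] [Pretriangulated C]

/-- A Postnikov system for the length-`n` complex
`A n ⟶ A (n-1) ⟶ ⋯ ⟶ A 0` (with differentials `f i : A (i+1) ⟶ A i`):
objects `B 0 = A 0, B 1, …, B n` together with morphisms
`g i : (B i)⟦-i⟧ ⟶ A i` and (paper indexing) `h (i+1) : A (i+1) ⟶ (B i)⟦-i⟧` such that
each `(B (i+1))⟦-(i+1)⟧ ⟶ A (i+1) ⟶ (B i)⟦-i⟧` extends to a distinguished triangle and
`g i ∘ h (i+1) = f (i+1)`.  The identification `B 0 = A 0` (with `g 0 = id`, `h 0 = id`)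
is recorded by requiring `g 0` to be an isomorphism. -/
structure PostnikovSystem (n : ℕ) (A : ℕ → C) (f : ∀ i : ℕ, A (i + 1) ⟶ A i) where
  B : ℕ → C
  g : ∀ i : ℕ, (B i)⟦(-(i : ℤ))⟧ ⟶ A i
  h : ∀ i : ℕ, A (i + 1) ⟶ (B i)⟦(-(i : ℤ))⟧
  g0_isIso : IsIso (g 0)
  comm : ∀ i : ℕ, i < n → h i ≫ g i = f i
  tri : ∀ i : ℕ, i < n →
    ∃ d : (B i)⟦(-(i : ℤ))⟧ ⟶ ((B (i + 1))⟦(-((i : ℤ) + 1))⟧)⟦(1 : ℤ)⟧,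
      Triangle.mk (g (i + 1)) (h i) d ∈ distTriang C

/-- `X` is a (right) convolution of the length-`n` complex `(A, f)` if there is a Postnikov
system for it whose final object `B n` is isomorphic to `X`. -/
def IsConvolution (n : ℕ) (A : ℕ → C) (f : ∀ i : ℕ, A (i + 1) ⟶ A i) (X : C) : Prop :=
  ∃ P : PostnikovSystem n A f, Nonempty (P.B n ≅ X)

set_option linter.unusedSectionVars false
set_option maxHeartbeats 1000000

lemma aux_sEq {X Y : C} (t : ℤ) (h : X = Y) : (X⟦t⟧ : C) = Y⟦t⟧ := by rw [h]

/-- Auxiliary vanishing invariant carried along the induction. -/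
def AuxVan (n : ℕ) (A : ℕ → C) (m : ℕ) (B : ℕ → C) : Prop :=
  ∀ j s : ℕ, j ≤ m → s ≤ n → j + 3 ≤ s →
    ∀ φ : (A s)⟦((s : ℤ) - 2 - (j : ℤ))⟧ ⟶ (B j)⟦(-(j : ℤ))⟧, φ = 0

lemma aux_shift_neg_one {X Y : C} (ψ : X ⟶ Y⟦(-1 : ℤ)⟧)
    (h : (shiftFunctor C (1:ℤ)).map ψ ≫
      (shiftFunctorCompIsoId C (-1:ℤ) (1:ℤ) (by ring)).hom.app Y = 0) :
    ψ = 0 := by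
  rw [Preadditive.IsIso.comp_right_eq_zero] at h
  exact (shiftFunctor C (1:ℤ)).map_eq_zero_iff.mp h

lemma aux_hvan_int (n : ℕ) (A : ℕ → C)
    (hvan : ∀ i k : ℕ, 1 ≤ k → i + k + 2 ≤ n →
      ∀ φ : (A (i + k + 2))⟦(k : ℤ)⟧ ⟶ A i, φ = 0)
    (s i : ℕ) (k : ℤ) (h1 : 1 ≤ k) (h2 : (s : ℤ) = i + k + 2) (h3 : s ≤ n)
    (φ : (A s)⟦k⟧ ⟶ A i) : φ = 0 := by
  obtain ⟨k', rfl⟩ : ∃ k' : ℕ, k = (k' : ℤ) := ⟨k.toNat, by omega⟩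
  obtain rfl : s = i + k' + 2 := by omega
  exact hvan i k' (by omega) h3 φ

lemma aux_base (n : ℕ) (A : ℕ → C) (f : ∀ i : ℕ, A (i + 1) ⟶ A i)
    (hvan : ∀ i k : ℕ, 1 ≤ k → i + k + 2 ≤ n →
      ∀ φ : (A (i + k + 2))⟦(k : ℤ)⟧ ⟶ A i, φ = 0) :
    ∃ P : PostnikovSystem 0 A f, AuxVan n A 0 P.B := by
  let e : (A 0)⟦(-((0:ℕ):ℤ))⟧ ≅ A 0 := (shiftFunctorZero' C (-((0:ℕ):ℤ)) (by simp)).app (A 0)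
  refine ⟨{ B := fun _ => A 0,
            g := fun i => if h : i = 0 then
              eqToHom (by rw [h]) ≫ e.hom ≫ eqToHom (show A 0 = A i by rw [h]) else 0,
            h := fun _ => 0,
            g0_isIso := ?_, comm := ?_, tri := ?_ }, ?_⟩
  · rw [dif_pos rfl]
    infer_instance
  · intro i hi; omega
  · intro i hi; omega
  · intro j s hj hs hjs φ
    obtain rfl : j = 0 := by omega
    have h0 : φ ≫ e.hom = 0 :=
      aux_hvan_int n A hvan s 0 _ (by omega) (by push_cast; ring) hs (φ ≫ e.hom)
    rwa [Preadditive.IsIso.comp_right_eq_zero] at h0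

lemma aux_lift (n : ℕ) (A : ℕ → C) (f : ∀ i : ℕ, A (i + 1) ⟶ A i)
    (hcx : ∀ i : ℕ, i + 1 < n → f (i + 1) ≫ f i = 0)
    (hvan : ∀ i k : ℕ, 1 ≤ k → i + k + 2 ≤ n →
      ∀ φ : (A (i + k + 2))⟦(k : ℤ)⟧ ⟶ A i, φ = 0)
    (m : ℕ) (hm : m < n)
    (P : PostnikovSystem m A f) (van : AuxVan n A m P.B) :
    ∃ hnew : A (m+1) ⟶ (P.B m)⟦(-(m:ℤ))⟧, hnew ≫ P.g m = f m := by
  cases m with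
  | zero =>
    haveI := P.g0_isIso
    exact ⟨f 0 ≫ inv (P.g 0), by simp⟩
  | succ k =>
    obtain ⟨d₀, T₀⟩ := P.tri k (by omega)
    have hobs : f (k+1) ≫ P.h k = 0 := by
      have h1 : (f (k+1) ≫ P.h k) ≫ P.g k = 0 := by
        rw [Category.assoc, P.comm k (by omega), hcx k (by omega)]
      cases k with
      | zero =>
        haveI := P.g0_isIso
        rwa [Preadditive.IsIso.comp_right_eq_zero] at h1
      | succ l =>
        obtain ⟨d₁, T₁⟩ := P.tri l (by omega)
        obtain ⟨γ, hγ⟩ := Triangle.coyoneda_exact₂ _ (inv_rot_of_distTriang _ T₁)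
          (f (l+1+1) ≫ P.h (l+1)) (by exact h1)
        have hγ0 : γ = 0 := by
          apply aux_shift_neg_one
          have hv := van l (l+3) (by omega) (by omega) (by omega)
            (eqToHom (show (A (l+3))⟦((l+3:ℕ):ℤ) - 2 - (l:ℤ)⟧ = (A (l+3))⟦(1:ℤ)⟧ by
              rw [show ((l+3:ℕ):ℤ) - 2 - (l:ℤ) = 1 by push_cast; ring]) ≫
             ((shiftFunctor C (1:ℤ)).map γ ≫
              (shiftFunctorCompIsoId C (-1:ℤ) (1:ℤ) (by ring)).hom.app ((P.B l)⟦(-(l:ℤ))⟧)))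
          rwa [Preadditive.IsIso.comp_left_eq_zero] at hv
        rw [hγ0, zero_comp] at hγ
        exact hγ
    obtain ⟨hnew, hlift⟩ := Triangle.coyoneda_exact₂ _ T₀ (f (k+1)) hobs
    exact ⟨hnew, hlift.symm⟩

lemma aux_step (n : ℕ) (A : ℕ → C) (f : ∀ i : ℕ, A (i + 1) ⟶ A i)
    (hcx : ∀ i : ℕ, i + 1 < n → f (i + 1) ≫ f i = 0)
    (hvan : ∀ i k : ℕ, 1 ≤ k → i + k + 2 ≤ n →
      ∀ φ : (A (i + k + 2))⟦(k : ℤ)⟧ ⟶ A i, φ = 0)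
    (m : ℕ) (hm : m < n)
    (P : PostnikovSystem m A f) (van : AuxVan n A m P.B) :
    ∃ P' : PostnikovSystem (m+1) A f, AuxVan n A (m+1) P'.B := by
  obtain ⟨hnew, hnewg⟩ := aux_lift n A f hcx hvan m hm P van
  obtain ⟨Z, gz, dz, Tmem⟩ := Pretriangulated.distinguished_cocone_triangle₁ hnew
  let Bnew : C := Z⟦((m:ℤ)+1)⟧
  let e : (Bnew)⟦(-((m+1:ℕ):ℤ))⟧ ≅ Z :=
    (shiftFunctorCompIsoId C ((m:ℤ)+1) (-((m+1:ℕ):ℤ)) (by push_cast; ring)).app Z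
  let gnew : (Bnew)⟦(-((m+1:ℕ):ℤ))⟧ ⟶ A (m+1) := e.hom ≫ gz
  let dnew : (P.B m)⟦(-(m:ℤ))⟧ ⟶ ((Bnew)⟦(-((m+1:ℕ):ℤ))⟧)⟦(1:ℤ)⟧ :=
    dz ≫ (shiftFunctor C (1:ℤ)).map e.inv
  have T'mem : Triangle.mk gnew hnew dnew ∈ distTriang C := by
    refine isomorphic_distinguished _ Tmem _ ?_
    refine Triangle.isoMk _ _ e (Iso.refl _) (Iso.refl _) ?_ ?_ ?_
    · simp [Triangle.mk, gnew]
    · simp [Triangle.mk]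
    · simp [Triangle.mk, dnew, ← Functor.map_comp]
  let B' : ℕ → C := fun j => if j ≤ m then P.B j else Bnew
  have hB : ∀ j, j ≤ m → B' j = P.B j := fun j h => if_pos h
  have hB' : B' (m+1) = Bnew := if_neg (by omega)
  let g' : ∀ i : ℕ, (B' i)⟦(-(i:ℤ))⟧ ⟶ A i := fun i =>
    if h : i ≤ m then eqToHom (aux_sEq _ (hB i h)) ≫ P.g i
    else if h2 : i = m+1 then
      eqToHom (show (B' i)⟦(-(i:ℤ))⟧ = (Bnew)⟦(-((m+1:ℕ):ℤ))⟧ by rw [h2, hB']) ≫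
        gnew ≫ eqToHom (show A (m+1) = A i by rw [h2])
    else 0
  let h' : ∀ i : ℕ, A (i+1) ⟶ (B' i)⟦(-(i:ℤ))⟧ := fun i =>
    if h : i < m then P.h i ≫ eqToHom (aux_sEq _ (hB i (le_of_lt h)).symm)
    else if h2 : i = m then
      eqToHom (show A (i+1) = A (m+1) by rw [h2]) ≫ hnew ≫
        eqToHom (show (P.B m)⟦(-(m:ℤ))⟧ = (B' i)⟦(-(i:ℤ))⟧ by rw [h2, hB m le_rfl])
    else 0
  have hg_le : ∀ (p : ℕ) (hp : p ≤ m),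
      g' p = eqToHom (aux_sEq _ (hB p hp)) ≫ P.g p := fun p hp => dif_pos hp
  have hg_top : g' (m+1) = eqToHom (aux_sEq _ hB') ≫ gnew ≫ eqToHom rfl :=
    (dif_neg (by omega)).trans (dif_pos rfl)
  have hh_lt : ∀ (p : ℕ) (hp : p < m),
      h' p = P.h p ≫ eqToHom (aux_sEq _ (hB p (le_of_lt hp)).symm) := fun p hp => dif_pos hp
  have hh_top : h' m = eqToHom rfl ≫ hnew ≫ eqToHom (aux_sEq _ (hB m le_rfl).symm) :=
    (dif_neg (lt_irrefl m)).trans (dif_pos rfl)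
  refine ⟨{ B := B', g := g', h := h', g0_isIso := ?_, comm := ?_, tri := ?_ }, ?_⟩
  · haveI := P.g0_isIso
    rw [hg_le 0 (Nat.zero_le m)]
    infer_instance
  · intro i hi
    by_cases h : i < m
    · rw [hh_lt i h, hg_le i (le_of_lt h), Category.assoc, eqToHom_trans_assoc]
      simpa using P.comm i h
    · obtain rfl : m = i := by omega
      rw [hh_top, hg_le m le_rfl]
      simp only [eqToHom_refl, Category.id_comp, Category.assoc, eqToHom_trans_assoc]
      simpa using hnewg
  · intro i hi
    by_cases h : i < m
    · obtain ⟨d₀, T₀⟩ := P.tri i h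
      have e1 : B' (i+1) = P.B (i+1) := hB (i+1) (by omega)
      have e3 : B' i = P.B i := hB i (le_of_lt h)
      refine ⟨eqToHom (aux_sEq _ e3) ≫ d₀ ≫ eqToHom (aux_sEq _ (aux_sEq _ e1.symm)), ?_⟩
      refine isomorphic_distinguished _ T₀ _ ?_
      refine Triangle.isoMk _ _ (eqToIso (aux_sEq _ e1)) (Iso.refl _)
        (eqToIso (aux_sEq _ e3)) ?_ ?_ ?_
      · rw [hg_le (i+1) (by omega)]
        simp [Triangle.mk]
      · rw [hh_lt i h]
        simp [Triangle.mk]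
      · simp [Triangle.mk, eqToHom_map]
    · obtain rfl : m = i := by omega
      have e1 : B' (m+1) = Bnew := hB'
      have e3 : B' m = P.B m := hB m le_rfl
      refine ⟨eqToHom (aux_sEq _ e3) ≫ dnew ≫ eqToHom (aux_sEq _ (aux_sEq _ e1.symm)), ?_⟩
      refine isomorphic_distinguished _ T'mem _ ?_
      refine Triangle.isoMk _ _ (eqToIso (aux_sEq _ e1)) (Iso.refl _)
        (eqToIso (aux_sEq _ e3)) ?_ ?_ ?_
      · rw [hg_top]
        simp [Triangle.mk]
      · rw [hh_top]
        simp [Triangle.mk]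
      · simp [Triangle.mk, eqToHom_map]
  · intro j s hj hs hjs φ
    by_cases h : j ≤ m
    · have hv := van j s h hs hjs (φ ≫ eqToHom (aux_sEq _ (hB j h)))
      exact (Preadditive.IsIso.comp_right_eq_zero φ _).mp hv
    · obtain rfl : j = m+1 := by omega
      have hφ₁ : (φ ≫ eqToHom (aux_sEq _ hB')) ≫ gnew = 0 :=
        aux_hvan_int n A hvan s (m+1) _ (by omega) (by push_cast; ring) hs _
      obtain ⟨ψ, hψ⟩ := Triangle.coyoneda_exact₂ _ (inv_rot_of_distTriang _ T'mem)
        (φ ≫ eqToHom (aux_sEq _ hB')) (by exact hφ₁)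
      have hψ0 : ψ = 0 := by
        apply aux_shift_neg_one
        have hv := van m s le_rfl hs (by omega)
          ((shiftFunctorAdd' C ((s:ℤ) - 2 - ((m+1:ℕ):ℤ)) 1 ((s:ℤ) - 2 - (m:ℤ))
              (by push_cast; ring)).hom.app (A s) ≫
            ((shiftFunctor C (1:ℤ)).map ψ ≫
             (shiftFunctorCompIsoId C (-1:ℤ) (1:ℤ) (by ring)).hom.app ((P.B m)⟦(-(m:ℤ))⟧)))
        exact (Preadditive.IsIso.comp_left_eq_zero _ _).mp hv
      rw [hψ0, zero_comp] at hψ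
      exact (Preadditive.IsIso.comp_right_eq_zero φ (eqToHom (aux_sEq _ hB'))).mp hψ

theorem convolution_exists
    (n : ℕ) (A : ℕ → C) (f : ∀ i : ℕ, A (i + 1) ⟶ A i)
    (hcx : ∀ i : ℕ, i + 1 < n → f (i + 1) ≫ f i = 0)
    (hvan : ∀ i k : ℕ, 1 ≤ k → i + k + 2 ≤ n →
      ∀ φ : (A (i + k + 2))⟦(k : ℤ)⟧ ⟶ A i, φ = 0) :
    ∃ X : C, IsConvolution n A f X := by
  have key : ∀ m, m ≤ n → ∃ P : PostnikovSystem m A f, AuxVan n A m P.B := by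
    intro m
    induction m with
    | zero => exact fun _ => aux_base n A f hvan
    | succ k ih =>
      intro hk
      obtain ⟨P, van⟩ := ih (by omega)
      exact aux_step n A f hcx hvan k (by omega) P van
  obtain ⟨P, -⟩ := key n le_rfl
  exact ⟨P.B n, P, ⟨Iso.refl _⟩⟩
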